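/- arXiv:1903.01165 — 5 statements merged into one kernel-verified Lean document; each statement's English description precedes it below -/
import Mathlib

section
/- Let G be a finite simple graph with vertex set V of size n, let p : V → [0,1] be reliabilities, and let x ∈ V. Then the Shapley value of x in the reliability extension of the network centrality game Γ_{NC1} satisfies Sh[v̄_{NC1}](x) = p_x · Σ_{y ∈ N̂(x)} Σ_{S ⊆ N̂(y)∖{x}} (1/(|S|+1)) · Π_{S, N̂(y)∖{x}}(p). -/
open Finset

attribute [local instance] Classical.propDecidable

noncomputable section

/-- `Π_{T,S}(p) = (∏_{i∈T} p i) * (∏_{i∈S\T} (1 - p i))`. -/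
def prodPi {α : Type*} (p : α → ℝ) (T S : Finset α) : ℝ :=
  (∏ i ∈ T, p i) * (∏ i ∈ S \ T, (1 - p i))

/-- Reliability extension of a TU-game. -/
def relExt {α : Type*} (p : α → ℝ) (v : Finset α → ℝ) (S : Finset α) : ℝ :=
  ∑ T ∈ S.powerset, v T * prodPi p T S

/-- The set of players preceding `x` in the ordering `σ`. -/
def precedingSet {α : Type*} [Fintype α] (σ : Fin (Fintype.card α) ≃ α) (x : α) : Finset α :=
  Finset.univ.filter fun y => σ.symm y < σ.symm x

/-- The Shapley value of player `x` in the TU-game `v`. -/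
def shapley {α : Type*} [Fintype α] (v : Finset α → ℝ) (x : α) : ℝ :=
  (1 / ((Fintype.card α).factorial : ℝ)) *
    ∑ σ : Fin (Fintype.card α) ≃ α,
      (v (insert x (precedingSet σ x)) - v (precedingSet σ x))

/-- The (open) neighborhood of `v` as a finset. -/
def nbhd {α : Type*} [Fintype α] (G : SimpleGraph α) (v : α) : Finset α :=
  Finset.univ.filter fun y => G.Adj v y

/-- `N̂(v) = {v} ∪ N(v)`. -/
def closedNbhd {α : Type*} [Fintype α] (G : SimpleGraph α) (v : α) : Finset α :=
  insert v (nbhd G v)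

/-- `δ(S)`: vertices outside `S` having a neighbor in `S`. -/
def extBoundary {α : Type*} [Fintype α] (G : SimpleGraph α) (S : Finset α) : Finset α :=
  Finset.univ.filter fun y => y ∉ S ∧ ∃ x ∈ S, G.Adj x y

/-- The network centrality game `Γ_{NC1}`: `v(S) = |S ∪ δ(S)|`. -/
def vNC1 {α : Type*} [Fintype α] (G : SimpleGraph α) (S : Finset α) : ℝ :=
  ((S ∪ extBoundary G S).card : ℝ)

lemma sum_prodPi {α : Type*} (p : α → ℝ) (A : Finset α) :
    ∑ S ∈ A.powerset, prodPi p S A = 1 := by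
  have h := Finset.prod_add p (fun i => 1 - p i) A
  simp only [add_sub_cancel, Finset.prod_const_one] at h
  simpa [prodPi] using h.symm

lemma sum_prodPi_disjoint {α : Type*} (p : α → ℝ) (A C : Finset α) :
    ∑ S ∈ A.powerset.filter (fun S => Disjoint S C), prodPi p S A
      = ∏ i ∈ A ∩ C, (1 - p i) := by
  have hset : A.powerset.filter (fun S => Disjoint S C) = (A \ C).powerset := by
    ext S
    simp only [mem_filter, mem_powerset, Finset.subset_sdiff]
  rw [hset]
  have key : ∀ S ∈ (A \ C).powerset, prodPi p S A = (∏ i ∈ A ∩ C, (1 - p i)) * prodPi p S (A \ C) := by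
    intro S hS
    rw [mem_powerset] at hS
    have hsplit : A \ S = (A ∩ C) ∪ ((A \ C) \ S) := by
      ext i
      simp only [mem_sdiff, mem_inter, mem_union]
      constructor
      · intro ⟨hiA, hiS⟩
        by_cases h : i ∈ C
        · exact Or.inl ⟨hiA, h⟩
        · exact Or.inr ⟨⟨hiA, h⟩, hiS⟩
      · rintro (⟨hiA, hiC⟩ | ⟨⟨hiA, _⟩, hiS⟩)
        · exact ⟨hiA, fun h => (mem_sdiff.mp (hS h)).2 hiC⟩
        · exact ⟨hiA, hiS⟩
    have hdisj : Disjoint (A ∩ C) ((A \ C) \ S) := by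
      refine Finset.disjoint_left.mpr ?_
      intro i hi hi'
      exact (mem_sdiff.mp (mem_sdiff.mp hi').1).2 (mem_inter.mp hi).2
    rw [prodPi, prodPi, hsplit, Finset.prod_union hdisj]
    ring
  rw [Finset.sum_congr rfl key, ← Finset.mul_sum, sum_prodPi, mul_one]

lemma count_perm {α : Type*} [Fintype α] (x : α) (S : Finset α) (hx : x ∉ S) :
    ((Finset.univ.filter (fun σ : Fin (Fintype.card α) ≃ α =>
        ∀ s ∈ S, σ.symm x ≤ σ.symm s)).card) * (S.card + 1)
      = (Fintype.card α).factorial := by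
  classical
  set T : Finset α := insert x S with hT
  set F : α → Finset (Fin (Fintype.card α) ≃ α) :=
    fun s => Finset.univ.filter (fun σ => ∀ t ∈ T, σ.symm s ≤ σ.symm t) with hF
  have hmemF : ∀ s σ, σ ∈ F s ↔ ∀ t ∈ T, σ.symm s ≤ σ.symm t := by
    intro s σ; simp [hF]
  have happly : ∀ (a b : α) (σ : Fin (Fintype.card α) ≃ α) (u : α),
      (σ.trans (Equiv.swap a b)).symm u = σ.symm (Equiv.swap a b u) := by
    intro a b σ u
    simp [Equiv.symm_trans_apply, Equiv.symm_swap]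
  have hswapT : ∀ a ∈ T, ∀ b ∈ T, ∀ t ∈ T, Equiv.swap a b t ∈ T := by
    intro a ha b hb t ht
    rcases eq_or_ne t a with rfl | hta
    · rw [Equiv.swap_apply_left]; exact hb
    rcases eq_or_ne t b with rfl | htb
    · rw [Equiv.swap_apply_right]; exact ha
    · rw [Equiv.swap_apply_of_ne_of_ne hta htb]; exact ht
  have hswap : ∀ a ∈ T, ∀ b ∈ T, ∀ σ, σ ∈ F a → σ.trans (Equiv.swap a b) ∈ F b := by
    intro a ha b hb σ hσ
    rw [hmemF] at hσ ⊢
    intro t ht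
    rw [happly, happly, Equiv.swap_apply_right]
    exact hσ _ (hswapT a ha b hb t ht)
  have hcancel : ∀ (a b : α) (σ : Fin (Fintype.card α) ≃ α),
      (σ.trans (Equiv.swap a b)).trans (Equiv.swap a b) = σ := by
    intro a b σ
    rw [Equiv.trans_assoc, Equiv.swap_swap, Equiv.trans_refl]
  have hxT : x ∈ T := mem_insert_self x S
  have hcard : ∀ s ∈ T, (F s).card = (F x).card := by
    intro s hs
    refine Finset.card_bij' (fun σ _ => σ.trans (Equiv.swap s x))
      (fun σ _ => σ.trans (Equiv.swap x s)) ?_ ?_ ?_ ?_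
    · intro σ hσ; exact hswap s hs x hxT σ hσ
    · intro σ hσ; exact hswap x hxT s hs σ hσ
    · intro σ hσ; rw [Equiv.swap_comm]; exact hcancel _ _ σ
    · intro σ hσ; rw [Equiv.swap_comm]; exact hcancel _ _ σ
  have hunion : (Finset.univ : Finset (Fin (Fintype.card α) ≃ α)) = T.biUnion F := by
    ext σ
    simp only [mem_biUnion, mem_univ, true_iff]
    obtain ⟨s, hs, hmin⟩ := T.exists_min_image (fun t => σ.symm t) ⟨x, hxT⟩
    exact ⟨s, hs, (hmemF s σ).mpr hmin⟩
  have hdisj : ∀ a ∈ T, ∀ b ∈ T, a ≠ b → Disjoint (F a) (F b) := by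
    intro a haT b hbT hab
    refine Finset.disjoint_left.mpr fun σ hσa hσb => ?_
    rw [hmemF] at hσa hσb
    exact hab (σ.symm.injective (le_antisymm (hσa b hbT) (hσb a haT)))
  have hcardT : T.card = S.card + 1 := card_insert_of_notMem hx
  have huniv : (Finset.univ : Finset (Fin (Fintype.card α) ≃ α)).card
      = (Fintype.card α).factorial := by
    rw [Finset.card_univ, Fintype.card_equiv (Fintype.equivFin α).symm, Fintype.card_fin]
  have hFx : F x = Finset.univ.filter (fun σ : Fin (Fintype.card α) ≃ α =>
      ∀ s ∈ S, σ.symm x ≤ σ.symm s) := by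
    ext σ
    rw [hmemF, mem_filter]
    simp only [mem_univ, true_and]
    constructor
    · intro h s hs; exact h s (mem_insert_of_mem hs)
    · intro h t ht
      rcases mem_insert.mp ht with rfl | ht'
      · exact le_refl _
      · exact h t ht'
  have h1 : (Fintype.card α).factorial = ∑ s ∈ T, (F s).card := by
    rw [← huniv, hunion, card_biUnion hdisj]
  rw [Finset.sum_congr rfl hcard, Finset.sum_const, smul_eq_mul] at h1
  rw [← hFx, h1, hcardT, Nat.mul_comm]

lemma mem_closedNbhd {α : Type*} [Fintype α] (G : SimpleGraph α) (y z : α) :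
    z ∈ closedNbhd G y ↔ z = y ∨ G.Adj y z := by
  simp [closedNbhd, nbhd, eq_comm]

lemma mem_union_extBoundary {α : Type*} [Fintype α] (G : SimpleGraph α) (W : Finset α) (y : α) :
    y ∈ W ∪ extBoundary G W ↔ ¬ Disjoint W (closedNbhd G y) := by
  rw [Finset.not_disjoint_iff]
  simp only [mem_union, extBoundary, mem_filter, mem_univ, true_and]
  constructor
  · rintro (h | ⟨hy, z, hz, hadj⟩)
    · exact ⟨y, h, (mem_closedNbhd G y y).mpr (Or.inl rfl)⟩
    · exact ⟨z, hz, (mem_closedNbhd G y z).mpr (Or.inr hadj.symm)⟩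
  · rintro ⟨z, hzW, hz⟩
    rcases (mem_closedNbhd G y z).mp hz with rfl | hadj
    · exact Or.inl hzW
    · by_cases hyW : y ∈ W
      · exact Or.inl hyW
      · exact Or.inr ⟨hyW, z, hzW, hadj.symm⟩

lemma relExt_vNC1 {α : Type*} [Fintype α] (G : SimpleGraph α) (p : α → ℝ) (T : Finset α) :
    relExt p (vNC1 G) T = ∑ y : α, (1 - ∏ i ∈ T ∩ closedNbhd G y, (1 - p i)) := by
  have hv : ∀ W : Finset α, vNC1 G W
      = ∑ y : α, (if ¬ Disjoint W (closedNbhd G y) then (1:ℝ) else 0) := by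
    intro W
    have hfil : Finset.univ.filter (fun y => ¬ Disjoint W (closedNbhd G y))
        = W ∪ extBoundary G W := by
      ext y
      simp only [mem_filter, mem_univ, true_and]
      exact (mem_union_extBoundary G W y).symm
    rw [vNC1, Finset.sum_boole, hfil]
  calc relExt p (vNC1 G) T
      = ∑ W ∈ T.powerset, ∑ y : α,
          (if ¬ Disjoint W (closedNbhd G y) then prodPi p W T else 0) := by
        refine Finset.sum_congr rfl fun W _ => ?_
        rw [hv, Finset.sum_mul]
        refine Finset.sum_congr rfl fun y _ => ?_
        split <;> simp
    _ = ∑ y : α, ∑ W ∈ T.powerset,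
          (if ¬ Disjoint W (closedNbhd G y) then prodPi p W T else 0) := Finset.sum_comm
    _ = ∑ y : α, (1 - ∏ i ∈ T ∩ closedNbhd G y, (1 - p i)) := by
        refine Finset.sum_congr rfl fun y _ => ?_
        have hsplit : ∑ W ∈ T.powerset,
            (if ¬ Disjoint W (closedNbhd G y) then prodPi p W T else 0)
            = ∑ W ∈ T.powerset, prodPi p W T -
              ∑ W ∈ T.powerset, (if Disjoint W (closedNbhd G y) then prodPi p W T else 0) := by
          rw [← Finset.sum_sub_distrib]
          refine Finset.sum_congr rfl fun W _ => ?_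
          by_cases h : Disjoint W (closedNbhd G y) <;> simp [h]
        rw [hsplit, sum_prodPi, ← Finset.sum_filter, sum_prodPi_disjoint]

lemma marginal_vNC1 {α : Type*} [Fintype α] (G : SimpleGraph α) (p : α → ℝ) (x : α)
    (T : Finset α) (hxT : x ∉ T) :
    relExt p (vNC1 G) (insert x T) - relExt p (vNC1 G) T
      = p x * ∑ y ∈ closedNbhd G x, ∏ i ∈ ((closedNbhd G y).erase x) ∩ T, (1 - p i) := by
  rw [relExt_vNC1, relExt_vNC1, ← Finset.sum_sub_distrib]
  have hterm : ∀ y ∈ (Finset.univ : Finset α),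
      (1 - ∏ i ∈ (insert x T) ∩ closedNbhd G y, (1 - p i)) -
        (1 - ∏ i ∈ T ∩ closedNbhd G y, (1 - p i))
      = ∏ i ∈ T ∩ closedNbhd G y, (1 - p i) -
          ∏ i ∈ (insert x T) ∩ closedNbhd G y, (1 - p i) := fun y _ => by ring
  rw [Finset.sum_congr rfl hterm]
  rw [← Finset.sum_subset (Finset.subset_univ (closedNbhd G x))
    (fun y _ hy => by
      have hx' : x ∉ closedNbhd G y := by
        rw [mem_closedNbhd]
        rw [mem_closedNbhd] at hy
        rintro (rfl | hadj)
        · exact hy (Or.inl rfl)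
        · exact hy (Or.inr hadj.symm)
      rw [Finset.insert_inter_of_notMem hx', sub_self])]
  rw [Finset.mul_sum]
  refine Finset.sum_congr rfl fun y hy => ?_
  have hxy : x ∈ closedNbhd G y := by
    rw [mem_closedNbhd] at hy ⊢
    rcases hy with rfl | hadj
    · exact Or.inl rfl
    · exact Or.inr hadj.symm
  have hx2 : x ∉ T ∩ closedNbhd G y := fun h => hxT (mem_inter.mp h).1
  rw [Finset.insert_inter_of_mem hxy, Finset.prod_insert hx2]
  have h3 : ((closedNbhd G y).erase x) ∩ T = T ∩ closedNbhd G y := by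
    ext i
    simp only [mem_inter, mem_erase]
    constructor
    · rintro ⟨⟨_, hi⟩, hiT⟩; exact ⟨hiT, hi⟩
    · rintro ⟨hiT, hi⟩; exact ⟨⟨fun h => hxT (h ▸ hiT), hi⟩, hiT⟩
  rw [h3]; ring

lemma step2 {α : Type*} [Fintype α] (p : α → ℝ) (x : α) (A : Finset α) (hx : x ∉ A) :
    ∑ σ : Fin (Fintype.card α) ≃ α, ∏ i ∈ A ∩ precedingSet σ x, (1 - p i)
      = ((Fintype.card α).factorial : ℝ) *
          ∑ S ∈ A.powerset, (1 / (S.card + 1) : ℝ) * prodPi p S A := by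
  have hterm : ∀ σ ∈ (Finset.univ : Finset (Fin (Fintype.card α) ≃ α)),
      ∏ i ∈ A ∩ precedingSet σ x, (1 - p i)
        = ∑ S ∈ A.powerset, (if Disjoint S (precedingSet σ x) then prodPi p S A else 0) := by
    intro σ _
    rw [← Finset.sum_filter, sum_prodPi_disjoint]
  rw [Finset.sum_congr rfl hterm, Finset.sum_comm, Finset.mul_sum]
  refine Finset.sum_congr rfl fun S hS => ?_
  rw [← Finset.sum_filter, Finset.sum_const, nsmul_eq_mul]
  have hxS : x ∉ S := fun h => hx (Finset.mem_powerset.mp hS h)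
  have hfilter : Finset.univ.filter
      (fun σ : Fin (Fintype.card α) ≃ α => Disjoint S (precedingSet σ x))
      = Finset.univ.filter (fun σ : Fin (Fintype.card α) ≃ α =>
          ∀ s ∈ S, σ.symm x ≤ σ.symm s) := by
    ext σ
    simp only [mem_filter, mem_univ, true_and]
    rw [Finset.disjoint_left]
    constructor
    · intro h s hs
      have := h hs
      simp only [precedingSet, mem_filter, mem_univ, true_and, not_lt] at this
      exact this
    · intro h s hs hmem
      simp only [precedingSet, mem_filter, mem_univ, true_and] at hmem
      exact absurd hmem (not_lt.mpr (h s hs))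
  rw [hfilter]
  have hcount := count_perm x S hxS
  have hcast : ((Finset.univ.filter (fun σ : Fin (Fintype.card α) ≃ α =>
      ∀ s ∈ S, σ.symm x ≤ σ.symm s)).card : ℝ) * ((S.card : ℝ) + 1)
      = ((Fintype.card α).factorial : ℝ) := by exact_mod_cast hcount
  have hne : ((S.card : ℝ) + 1) ≠ 0 := by positivity
  have hc : ((Finset.univ.filter (fun σ : Fin (Fintype.card α) ≃ α =>
      ∀ s ∈ S, σ.symm x ≤ σ.symm s)).card : ℝ)
      = ((Fintype.card α).factorial : ℝ) * (1 / ((S.card : ℝ) + 1)) := by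
    field_simp
    linarith [hcast]
  rw [hc]; ring


theorem stmt_2 {α : Type*} [Fintype α] [DecidableEq α] (G : SimpleGraph α)
    (p : α → ℝ) (hp : ∀ i, p i ∈ Set.Icc (0 : ℝ) 1) (x : α) :
    shapley (relExt p (vNC1 G)) x =
      p x * ∑ y ∈ closedNbhd G x, ∑ S ∈ ((closedNbhd G y).erase x).powerset,
        (1 / (S.card + 1) : ℝ) * prodPi p S ((closedNbhd G y).erase x) := by
  have hinst : ‹DecidableEq α› = (fun a b => Classical.propDecidable (a = b)) := by
    funext a b; exact Subsingleton.elim _ _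
  subst hinst
  rw [shapley]
  have hmarg : ∀ σ ∈ (Finset.univ : Finset (Fin (Fintype.card α) ≃ α)),
      relExt p (vNC1 G) (insert x (precedingSet σ x)) - relExt p (vNC1 G) (precedingSet σ x)
        = p x * ∑ y ∈ closedNbhd G x,
            ∏ i ∈ ((closedNbhd G y).erase x) ∩ precedingSet σ x, (1 - p i) := by
    intro σ _
    apply marginal_vNC1
    simp [precedingSet]
  rw [Finset.sum_congr rfl hmarg, ← Finset.mul_sum, Finset.sum_comm]
  have hst : ∀ y ∈ closedNbhd G x,
      ∑ σ : Fin (Fintype.card α) ≃ α,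
        ∏ i ∈ ((closedNbhd G y).erase x) ∩ precedingSet σ x, (1 - p i)
        = ((Fintype.card α).factorial : ℝ) *
            ∑ S ∈ ((closedNbhd G y).erase x).powerset,
              (1 / (S.card + 1) : ℝ) * prodPi p S ((closedNbhd G y).erase x) :=
    fun y _ => step2 p x _ (Finset.notMem_erase x _)
  rw [Finset.sum_congr rfl hst, ← Finset.mul_sum]
  have hfac : ((Fintype.card α).factorial : ℝ) ≠ 0 :=
    Nat.cast_ne_zero.mpr (Nat.factorial_ne_zero _)
  field_simp

end
end

section
/- In a credit-attribution setting with reliabilities p : N → [0,1], for every author x the Shapley value of x in the reliability extension of the full obligation game satisfies Sh[v̄_{FO}](x) = Σ_{k ∈ Pap_x} (w_k / n_k) · ∏_{i ∈ Auth_k} p_i. -/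
open Finset

attribute [local instance] Classical.propDecidable

noncomputable section

/-- `Pap x`: the papers having `x` among their authors. -/
def Pap {α β : Type*} [Fintype β] (Auth : β → Finset α) (x : α) : Finset β :=
  Finset.univ.filter fun k => x ∈ Auth k

/-- The full credit game. -/
def vFC {α β : Type*} [Fintype β] (Auth : β → Finset α) (w : β → ℝ) (S : Finset α) : ℝ :=
  ∑ k ∈ Finset.univ.filter (fun k => (Auth k ∩ S).Nonempty), w k

/-- The full obligation game. -/
def vFO {α β : Type*} [Fintype β] (Auth : β → Finset α) (w : β → ℝ) (S : Finset α) : ℝ :=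
  ∑ k ∈ Finset.univ.filter (fun k => Auth k ⊆ S), w k

/-- Key sum: `∑_{A ⊆ T ⊆ S} Π_{T,S} = ∏_{i∈A} p i` when `A ⊆ S`. -/
lemma sum_prodPi_aux {α : Type*} (p : α → ℝ) (A S : Finset α) (hAS : A ⊆ S) :
    ∑ T ∈ S.powerset.filter (fun T => A ⊆ T), prodPi p T S = ∏ i ∈ A, p i := by
  have key : ∑ T ∈ S.powerset.filter (fun T => A ⊆ T), prodPi p T S
      = ∑ U ∈ (S \ A).powerset, prodPi p (A ∪ U) S := by
    refine Finset.sum_nbij' (fun T => T \ A) (fun U => A ∪ U) ?_ ?_ ?_ ?_ ?_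
    · intro T hT
      simp only [Finset.mem_filter, Finset.mem_powerset] at hT ⊢
      exact Finset.sdiff_subset_sdiff hT.1 le_rfl
    · intro U hU
      simp only [Finset.mem_powerset] at hU
      simp only [Finset.mem_filter, Finset.mem_powerset]
      exact ⟨Finset.union_subset hAS (hU.trans Finset.sdiff_subset), Finset.subset_union_left⟩
    · intro T hT
      simp only [Finset.mem_filter, Finset.mem_powerset] at hT
      show A ∪ (T \ A) = T
      exact Finset.union_sdiff_of_subset hT.2
    · intro U hU
      simp only [Finset.mem_powerset] at hU
      have hd : Disjoint A U := Finset.disjoint_sdiff.mono_right hU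
      show (A ∪ U) \ A = U
      exact Finset.union_sdiff_cancel_left hd
    · intro T hT
      simp only [Finset.mem_filter, Finset.mem_powerset] at hT
      show prodPi p T S = prodPi p (A ∪ (T \ A)) S
      rw [Finset.union_sdiff_of_subset hT.2]
  rw [key]
  have hd : ∀ U ∈ (S \ A).powerset, prodPi p (A ∪ U) S
      = (∏ i ∈ A, p i) * ((∏ i ∈ U, p i) * ∏ i ∈ (S \ A) \ U, (1 - p i)) := by
    intro U hU
    simp only [Finset.mem_powerset] at hU
    have hdisj : Disjoint A U := Finset.disjoint_sdiff.mono_right hU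
    have h1 : ∏ i ∈ A ∪ U, p i = (∏ i ∈ A, p i) * ∏ i ∈ U, p i :=
      Finset.prod_union hdisj
    have h2 : S \ (A ∪ U) = (S \ A) \ U := by
      ext i
      simp only [Finset.mem_sdiff, Finset.mem_union]
      tauto
    unfold prodPi
    rw [h1, h2]; ring
  rw [Finset.sum_congr rfl hd, ← Finset.mul_sum]
  have h3 : ∑ U ∈ (S \ A).powerset, (∏ i ∈ U, p i) * ∏ i ∈ (S \ A) \ U, (1 - p i)
      = ∏ i ∈ S \ A, (p i + (1 - p i)) := (Finset.prod_add _ _ _).symm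
  rw [h3]
  simp

/-- The reliability extension of the full obligation game. -/
lemma relExt_vFO {α β : Type*} [Fintype β]
    (Auth : β → Finset α) (w : β → ℝ) (p : α → ℝ) (S : Finset α) :
    relExt p (vFO Auth w) S
      = ∑ k, (if Auth k ⊆ S then w k * ∏ i ∈ Auth k, p i else 0) := by
  unfold relExt vFO
  have step1 : ∀ T ∈ S.powerset,
      (∑ k ∈ Finset.univ.filter (fun k => Auth k ⊆ T), w k) * prodPi p T S
        = ∑ k, (if Auth k ⊆ T then w k * prodPi p T S else 0) := by
    intro T _
    rw [Finset.sum_filter, Finset.sum_mul]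
    refine Finset.sum_congr rfl fun k _ => ?_
    split <;> simp
  refine (Finset.sum_congr rfl step1).trans ?_
  rw [Finset.sum_comm]
  refine Finset.sum_congr rfl fun k _ => ?_
  rw [← Finset.sum_filter]
  by_cases h : Auth k ⊆ S
  · rw [if_pos h, ← Finset.mul_sum, sum_prodPi_aux p (Auth k) S h]
  · rw [if_neg h]
    have hemp : S.powerset.filter (fun T => Auth k ⊆ T) = ∅ := by
      apply Finset.filter_false_of_mem
      intro T hT hc
      exact h (hc.trans (Finset.mem_powerset.mp hT))
    rw [hemp, Finset.sum_empty]

/-- The number of orders in which `a` comes last among `A` does not depend on `a ∈ A`. -/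
lemma count_last_eq {α : Type*} [Fintype α] [DecidableEq α] (A : Finset α)
    (a b : α) (ha : a ∈ A) (hb : b ∈ A) :
    (Finset.univ.filter fun σ : Fin (Fintype.card α) ≃ α =>
        ∀ y ∈ A, σ.symm y ≤ σ.symm a).card
      = (Finset.univ.filter fun σ : Fin (Fintype.card α) ≃ α =>
        ∀ y ∈ A, σ.symm y ≤ σ.symm b).card := by
  have hmem : ∀ y ∈ A, Equiv.swap a b y ∈ A := by
    intro y hy
    rcases eq_or_ne y a with rfl | hya
    · rw [Equiv.swap_apply_left]; exact hb
    rcases eq_or_ne y b with rfl | hyb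
    · rw [Equiv.swap_apply_right]; exact ha
    · rw [Equiv.swap_apply_of_ne_of_ne hya hyb]; exact hy
  refine Finset.card_bij' (fun σ _ => σ.trans (Equiv.swap a b))
    (fun σ _ => σ.trans (Equiv.swap a b)) ?_ ?_ ?_ ?_
  · intro σ hσ
    simp only [Finset.mem_filter, Finset.mem_univ, true_and] at hσ ⊢
    intro y hy
    have h1 : (σ.trans (Equiv.swap a b)).symm y = σ.symm (Equiv.swap a b y) := by
      simp [Equiv.symm_trans_apply]
    have h2 : (σ.trans (Equiv.swap a b)).symm b = σ.symm a := by
      simp [Equiv.symm_trans_apply]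
    rw [h1, h2]
    exact hσ _ (hmem y hy)
  · intro σ hσ
    simp only [Finset.mem_filter, Finset.mem_univ, true_and] at hσ ⊢
    intro y hy
    have h1 : (σ.trans (Equiv.swap a b)).symm y = σ.symm (Equiv.swap a b y) := by
      simp [Equiv.symm_trans_apply]
    have h2 : (σ.trans (Equiv.swap a b)).symm a = σ.symm b := by
      simp [Equiv.symm_trans_apply]
    rw [h1, h2]
    exact hσ _ (hmem y hy)
  · intro σ _; ext i; simp
  · intro σ _; ext i; simp

/-- Counting lemma: `|A| * #{σ : x last in A} = n!`. -/
lemma count_last {α : Type*} [Fintype α] [DecidableEq α] (A : Finset α) (x : α) (hx : x ∈ A) :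
    A.card * (Finset.univ.filter fun σ : Fin (Fintype.card α) ≃ α =>
        ∀ y ∈ A, σ.symm y ≤ σ.symm x).card
      = (Fintype.card α).factorial := by
  classical
  have hA : A.Nonempty := ⟨x, hx⟩
  -- the "last element of A" map
  set f : (Fin (Fintype.card α) ≃ α) → α :=
    fun σ => σ ((A.image σ.symm).max' (hA.image _)) with hf
  have hfA : ∀ σ, f σ ∈ A := by
    intro σ
    have := Finset.max'_mem (A.image σ.symm) (hA.image _)
    rw [Finset.mem_image] at this
    obtain ⟨y, hy, hyeq⟩ := this
    simpa [hf, ← hyeq] using hy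
  have hfiff : ∀ (σ : Fin (Fintype.card α) ≃ α) (a : α), a ∈ A →
      ((∀ y ∈ A, σ.symm y ≤ σ.symm a) ↔ f σ = a) := by
    intro σ a haA
    constructor
    · intro h
      have h1 : σ.symm (f σ) = (A.image σ.symm).max' (hA.image _) := by simp [hf]
      have h2 : σ.symm (f σ) ≤ σ.symm a := h _ (hfA σ)
      have h3 : σ.symm a ≤ σ.symm (f σ) := by
        rw [h1]
        exact Finset.le_max' _ _ (Finset.mem_image_of_mem _ haA)
      have := le_antisymm h2 h3
      exact σ.symm.injective this
    · rintro rfl y hy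
      have h1 : σ.symm (f σ) = (A.image σ.symm).max' (hA.image _) := by simp [hf]
      rw [h1]
      exact Finset.le_max' _ _ (Finset.mem_image_of_mem _ hy)
  have hpart : (Finset.univ : Finset (Fin (Fintype.card α) ≃ α)).card
      = ∑ a ∈ A, (Finset.univ.filter fun σ : Fin (Fintype.card α) ≃ α =>
          ∀ y ∈ A, σ.symm y ≤ σ.symm a).card := by
    rw [Finset.card_eq_sum_card_fiberwise (f := f) (fun σ _ => hfA σ)]
    refine Finset.sum_congr rfl fun a haA => ?_
    congr 1
    apply Finset.filter_congr
    intro σ _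
    simp [hfiff σ a haA, eq_comm]
  have hconst : ∀ a ∈ A,
      (Finset.univ.filter fun σ : Fin (Fintype.card α) ≃ α =>
          ∀ y ∈ A, σ.symm y ≤ σ.symm a).card
        = (Finset.univ.filter fun σ : Fin (Fintype.card α) ≃ α =>
          ∀ y ∈ A, σ.symm y ≤ σ.symm x).card :=
    fun a haA => count_last_eq A a x haA hx
  rw [Finset.sum_congr rfl hconst, Finset.sum_const, smul_eq_mul] at hpart
  rw [← hpart, Finset.card_univ, Fintype.card_equiv (Fintype.equivFin α).symm,
    Fintype.card_fin]

lemma stmt6_aux {α β : Type*} [Fintype α] [Fintype β]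
    (Auth : β → Finset α) (hAuth : ∀ k, (Auth k).Nonempty)
    (w : β → ℝ) (p : α → ℝ) (x : α) :
    shapley (relExt p (vFO Auth w)) x =
      ∑ k ∈ Pap Auth x, (w k / ((Auth k).card : ℝ)) * ∏ i ∈ Auth k, p i := by
  have hfac : ((Fintype.card α).factorial : ℝ) ≠ 0 := by
    exact_mod_cast (Nat.factorial_pos _).ne'
  unfold shapley
  have hv := relExt_vFO Auth w p
  have hxpre : ∀ σ : Fin (Fintype.card α) ≃ α, x ∉ precedingSet σ x := by
    intro σ; simp [precedingSet]
  have hswap : ∑ σ : Fin (Fintype.card α) ≃ α,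
      (relExt p (vFO Auth w) (insert x (precedingSet σ x))
        - relExt p (vFO Auth w) (precedingSet σ x))
    = ∑ k, ∑ σ : Fin (Fintype.card α) ≃ α,
        ((if Auth k ⊆ insert x (precedingSet σ x) then w k * ∏ i ∈ Auth k, p i else 0)
          - (if Auth k ⊆ precedingSet σ x then w k * ∏ i ∈ Auth k, p i else 0)) := by
    rw [Finset.sum_comm]
    refine Finset.sum_congr rfl fun σ _ => ?_
    rw [hv, hv, Finset.sum_sub_distrib]
  rw [hswap]
  have hzero : ∀ k, x ∉ Auth k →
      (∑ σ : Fin (Fintype.card α) ≃ α,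
        ((if Auth k ⊆ insert x (precedingSet σ x) then w k * ∏ i ∈ Auth k, p i else 0)
          - (if Auth k ⊆ precedingSet σ x then w k * ∏ i ∈ Auth k, p i else 0))) = 0 := by
    intro k hk
    refine Finset.sum_eq_zero fun σ _ => ?_
    rw [if_congr (Finset.subset_insert_iff_of_notMem hk) rfl rfl, sub_self]
  have hinner : ∀ k, x ∈ Auth k →
      (∑ σ : Fin (Fintype.card α) ≃ α,
        ((if Auth k ⊆ insert x (precedingSet σ x) then w k * ∏ i ∈ Auth k, p i else 0)
          - (if Auth k ⊆ precedingSet σ x then w k * ∏ i ∈ Auth k, p i else 0)))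
      = ((Finset.univ.filter fun σ : Fin (Fintype.card α) ≃ α =>
          ∀ y ∈ Auth k, σ.symm y ≤ σ.symm x).card : ℝ) * (w k * ∏ i ∈ Auth k, p i) := by
    intro k hk
    have h1 : ∀ σ : Fin (Fintype.card α) ≃ α, ¬ (Auth k ⊆ precedingSet σ x) :=
      fun σ hsub => hxpre σ (hsub hk)
    have h2 : ∀ σ : Fin (Fintype.card α) ≃ α,
        (Auth k ⊆ insert x (precedingSet σ x)) ↔ ∀ y ∈ Auth k, σ.symm y ≤ σ.symm x := by
      intro σ
      constructor
      · intro hsub y hy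
        rcases Finset.mem_insert.mp (hsub hy) with rfl | hmem
        · exact le_rfl
        · exact le_of_lt (by simpa [precedingSet] using hmem)
      · intro h y hy
        rcases lt_or_eq_of_le (h y hy) with hlt | heq
        · exact Finset.mem_insert_of_mem (by simp [precedingSet, hlt])
        · have hxy : y = x := σ.symm.injective heq
          exact hxy ▸ Finset.mem_insert_self _ _
    have hpt : ∀ σ : Fin (Fintype.card α) ≃ α,
        ((if Auth k ⊆ insert x (precedingSet σ x) then w k * ∏ i ∈ Auth k, p i else 0)
          - (if Auth k ⊆ precedingSet σ x then w k * ∏ i ∈ Auth k, p i else 0))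
        = if (∀ y ∈ Auth k, σ.symm y ≤ σ.symm x) then w k * ∏ i ∈ Auth k, p i else 0 := by
      intro σ
      rw [if_neg (h1 σ), sub_zero]
      exact if_congr (h2 σ) rfl rfl
    rw [Finset.sum_congr rfl (fun σ _ => hpt σ), ← Finset.sum_filter,
      Finset.sum_const, nsmul_eq_mul]
  have hPap : ∀ k, (k ∈ Pap Auth x ↔ x ∈ Auth k) := by
    intro k; simp [Pap]
  have hsplit : ∑ k, (∑ σ : Fin (Fintype.card α) ≃ α,
        ((if Auth k ⊆ insert x (precedingSet σ x) then w k * ∏ i ∈ Auth k, p i else 0)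
          - (if Auth k ⊆ precedingSet σ x then w k * ∏ i ∈ Auth k, p i else 0)))
      = ∑ k ∈ Pap Auth x, (∑ σ : Fin (Fintype.card α) ≃ α,
        ((if Auth k ⊆ insert x (precedingSet σ x) then w k * ∏ i ∈ Auth k, p i else 0)
          - (if Auth k ⊆ precedingSet σ x then w k * ∏ i ∈ Auth k, p i else 0))) := by
    refine (Finset.sum_subset (Finset.subset_univ _) ?_).symm
    intro k _ hk
    exact hzero k (fun hx => hk ((hPap k).mpr hx))
  rw [hsplit, Finset.mul_sum]
  refine Finset.sum_congr rfl fun k hk => ?_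
  have hk' : x ∈ Auth k := (hPap k).mp hk
  rw [hinner k hk']
  have hcard := @count_last α _ (Classical.decEq α) (Auth k) x hk'
  have hcardR : ((Auth k).card : ℝ) *
      ((Finset.univ.filter fun σ : Fin (Fintype.card α) ≃ α =>
          ∀ y ∈ Auth k, σ.symm y ≤ σ.symm x).card : ℝ)
      = ((Fintype.card α).factorial : ℝ) := by exact_mod_cast hcard
  have hA0 : ((Auth k).card : ℝ) ≠ 0 := by
    exact_mod_cast (Finset.card_pos.mpr (hAuth k)).ne'
  field_simp
  linear_combination (w k * ∏ i ∈ Auth k, p i) * hcardR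

theorem stmt_6 {α β : Type*} [Fintype α] [Fintype β] [DecidableEq α]
    (Auth : β → Finset α) (hAuth : ∀ k, (Auth k).Nonempty)
    (w : β → ℝ) (hw : ∀ k, 0 ≤ w k)
    (p : α → ℝ) (hp : ∀ i, p i ∈ Set.Icc (0 : ℝ) 1) (x : α) :
    shapley (relExt p (vFO Auth w)) x =
      ∑ k ∈ Pap Auth x, (w k / ((Auth k).card : ℝ)) * ∏ i ∈ Auth k, p i :=
  stmt6_aux Auth hAuth w p x

end
end

section
/- In a credit-attribution setting with reliabilities p : N → [0,1], let x ∈ N and j ∈ N with j ≠ x, and regard Sh[v̄_{FC}](x) as a function of p. (i) If p_x > 0 and there exists a paper P_k with positive weight w_k > 0 such that both x and j belong to Auth_k, then p_j ↦ Sh[v̄_{FC}](x) is strictly decreasing on [0,1] (all other reliabilities fixed). (ii) If j is not a coauthor of x (i.e., no paper contains both x and j), then Sh[v̄_{FC}](x) does not depend on p_j. -/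
open Finset

attribute [local instance] Classical.propDecidable

noncomputable section

lemma sumA {α : Type*} (q : α → ℝ) (S : Finset α) :
    ∑ T ∈ S.powerset, prodPi q T S = 1 := by
  have h := Finset.prod_add (fun i => q i) (fun i => 1 - q i) S
  simp only [add_sub_cancel, Finset.prod_const_one] at h
  simp only [prodPi]
  exact h.symm

lemma sumB {α : Type*} (q : α → ℝ) (A S : Finset α) :
    ∑ T ∈ S.powerset, (if A ∩ T = ∅ then prodPi q T S else 0)
      = ∏ i ∈ S ∩ A, (1 - q i) := by
  have h := Finset.prod_add (fun i => if i ∈ A then (0:ℝ) else q i) (fun i => 1 - q i) S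
  have h1 : ∑ T ∈ S.powerset, (if A ∩ T = ∅ then prodPi q T S else 0)
      = ∑ T ∈ S.powerset, (∏ i ∈ T, (if i ∈ A then (0:ℝ) else q i)) * ∏ i ∈ S \ T, (1 - q i) := by
    refine Finset.sum_congr rfl fun T hT => ?_
    by_cases hAT : A ∩ T = ∅
    · rw [if_pos hAT]
      unfold prodPi
      refine congrArg₂ (· * ·) (Finset.prod_congr rfl fun i hi => ?_) rfl
      have : i ∉ A := by
        intro hiA
        exact Finset.notMem_empty i (hAT ▸ Finset.mem_inter.mpr ⟨hiA, hi⟩)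
      simp [this]
    · rw [if_neg hAT]
      obtain ⟨i, hi⟩ := Finset.nonempty_iff_ne_empty.mpr hAT
      rw [Finset.mem_inter] at hi
      rw [Finset.prod_eq_zero hi.2 (by simp [hi.1]), zero_mul]
  have h2 : ∏ i ∈ S, ((if i ∈ A then (0:ℝ) else q i) + (1 - q i))
      = ∏ i ∈ S ∩ A, (1 - q i) := by
    have hc : ∀ i ∈ S, ((if i ∈ A then (0:ℝ) else q i) + (1 - q i))
        = (if i ∈ A then (1 - q i) else 1) := by
      intro i _; by_cases hi : i ∈ A <;> simp [hi]
    rw [Finset.prod_congr rfl hc, Finset.prod_ite, Finset.prod_const_one, mul_one,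
      ← Finset.filter_mem_eq_inter]
  rw [h1, ← h, h2]

lemma relExt_vFC {α β : Type*} [Fintype β]
    (Auth : β → Finset α) (w : β → ℝ) (q : α → ℝ) (S : Finset α) :
    relExt q (vFC Auth w) S = ∑ k, w k * (1 - ∏ i ∈ S ∩ Auth k, (1 - q i)) := by
  unfold relExt vFC
  have h1 : ∀ T ∈ S.powerset,
      (∑ k ∈ Finset.univ.filter (fun k => (Auth k ∩ T).Nonempty), w k) * prodPi q T S
      = ∑ k : β, (if (Auth k ∩ T).Nonempty then w k * prodPi q T S else 0) := by
    intro T _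
    rw [Finset.sum_filter, Finset.sum_mul]
    refine Finset.sum_congr rfl fun k _ => ?_
    split <;> simp
  rw [Finset.sum_congr rfl h1, Finset.sum_comm]
  refine Finset.sum_congr rfl fun k _ => ?_
  have h2 : ∀ T ∈ S.powerset, (if (Auth k ∩ T).Nonempty then w k * prodPi q T S else 0)
      = w k * (prodPi q T S - (if Auth k ∩ T = ∅ then prodPi q T S else 0)) := by
    intro T _
    by_cases hn : (Auth k ∩ T).Nonempty
    · rw [if_pos hn, if_neg (Finset.nonempty_iff_ne_empty.mp hn)]; ring
    · rw [if_neg hn, if_pos (Finset.not_nonempty_iff_eq_empty.mp hn)]; ring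
  rw [Finset.sum_congr rfl h2, ← Finset.mul_sum, Finset.sum_sub_distrib, sumA, sumB]

lemma notMem_precedingSet {α : Type*} [Fintype α] (σ : Fin (Fintype.card α) ≃ α) (x : α) :
    x ∉ precedingSet σ x := by
  simp [precedingSet]

lemma shapley_relExt_vFC {α β : Type*} [Fintype α] [Fintype β]
    (Auth : β → Finset α) (w : β → ℝ) (q : α → ℝ) (x : α) :
    shapley (relExt q (vFC Auth w)) x
      = (1 / ((Fintype.card α).factorial : ℝ)) *
        ∑ σ : Fin (Fintype.card α) ≃ α, ∑ k : β,
          (if x ∈ Auth k then w k * q x * ∏ i ∈ precedingSet σ x ∩ Auth k, (1 - q i) else 0) := by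
  unfold shapley
  congr 1
  refine Finset.sum_congr rfl fun σ _ => ?_
  set S := precedingSet σ x with hS
  have hxS : x ∉ S := notMem_precedingSet σ x
  rw [relExt_vFC, relExt_vFC, ← Finset.sum_sub_distrib]
  refine Finset.sum_congr rfl fun k _ => ?_
  by_cases hx : x ∈ Auth k
  · rw [if_pos hx]
    have hins : insert x S ∩ Auth k = insert x (S ∩ Auth k) := by
      ext i; simp only [Finset.mem_inter, Finset.mem_insert]
      constructor
      · rintro ⟨hi | hi, hi2⟩
        · exact Or.inl hi
        · exact Or.inr ⟨hi, hi2⟩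
      · rintro (rfl | ⟨hi, hi2⟩)
        · exact ⟨Or.inl rfl, hx⟩
        · exact ⟨Or.inr hi, hi2⟩
    have hxSA : x ∉ S ∩ Auth k := fun h => hxS (Finset.mem_inter.mp h).1
    rw [hins, Finset.prod_insert hxSA]
    ring
  · rw [if_neg hx]
    have hins : insert x S ∩ Auth k = S ∩ Auth k := by
      ext i; simp only [Finset.mem_inter, Finset.mem_insert]
      constructor
      · rintro ⟨hi | hi, hi2⟩
        · exact absurd (hi ▸ hi2) hx
        · exact ⟨hi, hi2⟩
      · rintro ⟨hi, hi2⟩; exact ⟨Or.inr hi, hi2⟩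
    rw [hins]
    ring

lemma exists_sigma0 {α : Type*} [Fintype α] (x j : α) (hjx : j ≠ x) :
    ∃ σ : Fin (Fintype.card α) ≃ α, precedingSet σ x = {j} := by
  have hn : 1 < Fintype.card α := Fintype.one_lt_card_iff.mpr ⟨j, x, hjx⟩
  set n := Fintype.card α with hndef
  let z : Fin n := ⟨0, by omega⟩
  let o : Fin n := ⟨1, hn⟩
  have hzo : z ≠ o := by simp [z, o, Fin.ext_iff]
  let e : Fin n ≃ α := (Fintype.equivFin α).symm
  let a : Fin n := e.symm j
  let b : Fin n := e.symm x
  have hab : a ≠ b := fun h => hjx (e.symm.injective h)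
  let s1 : Equiv.Perm (Fin n) := Equiv.swap z a
  let c : Fin n := s1.symm b
  have hs1z : s1 z = a := Equiv.swap_apply_left z a
  have hs1c : s1 c = b := s1.apply_symm_apply b
  have hcz : c ≠ z := fun h => hab (by rw [← hs1z, ← h, hs1c])
  let s2 : Equiv.Perm (Fin n) := Equiv.swap o c
  have hs2z : s2 z = z := Equiv.swap_apply_of_ne_of_ne hzo hcz.symm
  have hs2o : s2 o = c := Equiv.swap_apply_left o c
  let σ : Fin n ≃ α := (s2.trans s1).trans e
  have hσz : σ z = j := by
    show e (s1 (s2 z)) = j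
    rw [hs2z, hs1z]
    exact e.apply_symm_apply j
  have hσo : σ o = x := by
    show e (s1 (s2 o)) = x
    rw [hs2o, hs1c]
    exact e.apply_symm_apply x
  refine ⟨σ, ?_⟩
  have hσsx : σ.symm x = o := by rw [← hσo, Equiv.symm_apply_apply]
  have hσsj : σ.symm j = z := by rw [← hσz, Equiv.symm_apply_apply]
  ext y
  simp only [precedingSet, Finset.mem_filter, Finset.mem_univ, true_and, Finset.mem_singleton,
    hσsx]
  constructor
  · intro hy
    have h0 : (σ.symm y : ℕ) < 1 := hy
    have : σ.symm y = z := by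
      apply Fin.ext
      show (σ.symm y : ℕ) = 0
      omega
    rw [← hσsj] at this
    exact σ.symm.injective this
  · rintro rfl
    rw [hσsj]
    show (0 : ℕ) < 1
    omega


lemma partI {α β : Type*} [Fintype α] [Fintype β]
    (Auth : β → Finset α) (w : β → ℝ) (hw : ∀ k, 0 ≤ w k)
    (p : α → ℝ) (hp : ∀ i, p i ∈ Set.Icc (0 : ℝ) 1)
    (x j : α) (hjx : j ≠ x)
    (u : ℝ → α → ℝ) (hu1 : ∀ t i, i ≠ j → u t i = p i) (hu2 : ∀ t, u t j = t)
    (hpx : 0 < p x) (hk : ∃ k, 0 < w k ∧ x ∈ Auth k ∧ j ∈ Auth k) :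
    StrictAntiOn (fun t => shapley (relExt (u t) (vFC Auth w)) x) (Set.Icc 0 1) := by
  set n := Fintype.card α with hn
  set A : ℝ := ∑ σ : Fin n ≃ α, ∑ k : β,
    (if x ∈ Auth k ∧ j ∉ precedingSet σ x ∩ Auth k then
      w k * p x * ∏ i ∈ precedingSet σ x ∩ Auth k, (1 - p i) else 0) with hA
  set B : ℝ := ∑ σ : Fin n ≃ α, ∑ k : β,
    (if x ∈ Auth k ∧ j ∈ precedingSet σ x ∩ Auth k then
      w k * p x * ∏ i ∈ (precedingSet σ x ∩ Auth k).erase j, (1 - p i) else 0) with hB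
  have key : ∀ t : ℝ, shapley (relExt (u t) (vFC Auth w)) x
      = (1 / (n.factorial : ℝ)) * (A + B * (1 - t)) := by
    intro t
    rw [shapley_relExt_vFC]
    congr 1
    rw [hA, hB, Finset.sum_mul, ← Finset.sum_add_distrib]
    refine Finset.sum_congr rfl fun σ _ => ?_
    rw [Finset.sum_mul, ← Finset.sum_add_distrib]
    refine Finset.sum_congr rfl fun k _ => ?_
    by_cases hx : x ∈ Auth k
    · rw [if_pos hx]
      have hux : u t x = p x := hu1 t x (Ne.symm hjx)
      by_cases hj : j ∈ precedingSet σ x ∩ Auth k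
      · rw [if_neg (fun h => h.2 hj), if_pos ⟨hx, hj⟩]
        rw [← Finset.mul_prod_erase _ _ hj, hu2, hux]
        have : ∏ i ∈ (precedingSet σ x ∩ Auth k).erase j, (1 - u t i)
            = ∏ i ∈ (precedingSet σ x ∩ Auth k).erase j, (1 - p i) := by
          refine Finset.prod_congr rfl fun i hi => ?_
          rw [hu1 t i (Finset.mem_erase.mp hi).1]
        rw [this]
        ring
      · rw [if_pos ⟨hx, hj⟩, if_neg (fun h => hj h.2)]
        have : ∏ i ∈ precedingSet σ x ∩ Auth k, (1 - u t i)
            = ∏ i ∈ precedingSet σ x ∩ Auth k, (1 - p i) := by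
          refine Finset.prod_congr rfl fun i hi => ?_
          rw [hu1 t i (fun h => hj (h ▸ hi))]
        rw [this, hux]
        ring
    · rw [if_neg hx, if_neg (fun h => hx h.1), if_neg (fun h => hx h.1)]
      ring
  have hnonneg : ∀ (σ : Fin n ≃ α) (k : β), (0:ℝ) ≤
      (if x ∈ Auth k ∧ j ∈ precedingSet σ x ∩ Auth k then
        w k * p x * ∏ i ∈ (precedingSet σ x ∩ Auth k).erase j, (1 - p i) else 0) := by
    intro σ k
    split
    · refine mul_nonneg (mul_nonneg (hw k) hpx.le) (Finset.prod_nonneg fun i _ => ?_)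
      have := (hp i).2
      linarith
    · exact le_refl 0
  have hBpos : 0 < B := by
    obtain ⟨σ0, hσ0⟩ := exists_sigma0 x j hjx
    obtain ⟨k0, hk0w, hk0x, hk0j⟩ := hk
    rw [hB]
    refine Finset.sum_pos' (fun σ _ => Finset.sum_nonneg fun k _ => hnonneg σ k)
      ⟨σ0, Finset.mem_univ _, ?_⟩
    refine Finset.sum_pos' (fun k _ => hnonneg σ0 k) ⟨k0, Finset.mem_univ _, ?_⟩
    have hjmem : j ∈ precedingSet σ0 x ∩ Auth k0 := by
      rw [hσ0]
      exact Finset.mem_inter.mpr ⟨Finset.mem_singleton_self j, hk0j⟩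
    rw [if_pos ⟨hk0x, hjmem⟩]
    have hempty : (precedingSet σ0 x ∩ Auth k0).erase j = ∅ := by
      rw [hσ0]
      ext i
      simp only [Finset.mem_erase, Finset.mem_inter, Finset.mem_singleton,
        Finset.notMem_empty, iff_false]
      rintro ⟨hne, rfl, _⟩
      exact hne rfl
    rw [hempty, Finset.prod_empty, mul_one]
    exact mul_pos hk0w hpx
  intro t _ s _ hts
  simp only [key]
  have hfac : 0 < (1 / (n.factorial : ℝ)) := by
    apply one_div_pos.mpr
    exact_mod_cast Nat.factorial_pos n
  apply mul_lt_mul_of_pos_left _ hfac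
  have h1 : B * (1 - s) < B * (1 - t) :=
    mul_lt_mul_of_pos_left (by linarith) hBpos
  linarith

lemma partII {α β : Type*} [Fintype α] [Fintype β]
    (Auth : β → Finset α) (w : β → ℝ)
    (x j : α) (hjx : j ≠ x)
    (h : ∀ k, ¬(x ∈ Auth k ∧ j ∈ Auth k))
    (q q' : α → ℝ) (hqq' : ∀ i, i ≠ j → q i = q' i) :
    shapley (relExt q (vFC Auth w)) x = shapley (relExt q' (vFC Auth w)) x := by
  rw [shapley_relExt_vFC, shapley_relExt_vFC]
  congr 1
  refine Finset.sum_congr rfl fun σ _ => Finset.sum_congr rfl fun k _ => ?_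
  by_cases hx : x ∈ Auth k
  · rw [if_pos hx, if_pos hx]
    have hjk : j ∉ Auth k := fun hj => h k ⟨hx, hj⟩
    rw [hqq' x (Ne.symm hjx)]
    congr 1
    refine Finset.prod_congr rfl fun i hi => ?_
    have : i ≠ j := fun hij => hjk (hij ▸ (Finset.mem_inter.mp hi).2)
    rw [hqq' i this]
  · rw [if_neg hx, if_neg hx]

theorem stmt_10 {α β : Type*} [Fintype α] [Fintype β] [DecidableEq α]
    (Auth : β → Finset α) (hAuth : ∀ k, (Auth k).Nonempty)
    (w : β → ℝ) (hw : ∀ k, 0 ≤ w k)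
    (p : α → ℝ) (hp : ∀ i, p i ∈ Set.Icc (0 : ℝ) 1)
    (x j : α) (hjx : j ≠ x) :
    ((0 < p x → (∃ k, 0 < w k ∧ x ∈ Auth k ∧ j ∈ Auth k) →
        StrictAntiOn (fun t => shapley (relExt (Function.update p j t) (vFC Auth w)) x)
          (Set.Icc 0 1))) ∧
      ((∀ k, ¬(x ∈ Auth k ∧ j ∈ Auth k)) → ∀ t ∈ Set.Icc (0 : ℝ) 1, ∀ s ∈ Set.Icc (0 : ℝ) 1,
        shapley (relExt (Function.update p j t) (vFC Auth w)) x =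
          shapley (relExt (Function.update p j s) (vFC Auth w)) x) := by
  constructor
  · intro hpx hk
    exact partI Auth w hw p hp x j hjx (fun t => Function.update p j t)
      (fun t i hij => Function.update_of_ne hij t p)
      (fun t => Function.update_self j t p) hpx hk
  · intro h t _ s _
    exact partII Auth w x j hjx h _ _
      (fun i hij => by rw [Function.update_of_ne hij, Function.update_of_ne hij])


end
end

section
/- In a credit-attribution setting with reliabilities p : N → [0,1], let x ∈ N be an author such that every paper containing x has exactly two authors (x and one other author). Then Sh[v̄_{FC}](x) = p_x · Σ_{l ∈ CA(x)} C(x,l) · (2 − p_l)/2, where CA(x) is the set of coauthors of x and C(x,l) = Σ_{k ∈ Pap_x ∩ Pap_l} w_k is the total weight of the papers jointly authored by x and l. -/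
open Finset

attribute [local instance] Classical.propDecidable

noncomputable section

/-- The set of coauthors of `x`. -/
def CA {α β : Type*} [Fintype α] [Fintype β] (Auth : β → Finset α) (x : α) : Finset α :=
  Finset.univ.filter fun l => l ≠ x ∧ ∃ k, x ∈ Auth k ∧ l ∈ Auth k

/-- `C(x,l)`: the total weight of papers jointly authored by `x` and `l`. -/
def jointContrib {α β : Type*} [Fintype β] (Auth : β → Finset α) (w : β → ℝ) (x l : α) : ℝ :=
  ∑ k ∈ Finset.univ.filter (fun k => x ∈ Auth k ∧ l ∈ Auth k), w k

set_option linter.unusedSectionVars false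
set_option linter.unusedVariables false

lemma sum_prodPi_eq_one {α : Type*} (p : α → ℝ) (S : Finset α) :
    ∑ T ∈ S.powerset, prodPi p T S = 1 := by
  have h := Finset.prod_add p (fun i => 1 - p i) S
  simp only [add_sub_cancel, Finset.prod_const_one] at h
  simpa [prodPi] using h.symm

lemma sum_prodPi_not_mem {α : Type*} (p : α → ℝ) (S : Finset α) (l : α) :
    ∑ T ∈ S.powerset.filter (fun T => l ∉ T), prodPi p T S
      = if l ∈ S then 1 - p l else 1 := by
  by_cases hl : l ∈ S
  · simp only [hl, if_true]
    have hset : S.powerset.filter (fun T => l ∉ T) = (S.erase l).powerset := by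
      ext T
      simp [Finset.subset_erase, and_comm]
    rw [hset]
    have hstep : ∀ T ∈ (S.erase l).powerset,
        prodPi p T S = (1 - p l) * prodPi p T (S.erase l) := by
      intro T hT
      rw [Finset.mem_powerset] at hT
      have hlT : l ∉ T := fun h => (Finset.mem_erase.mp (hT h)).1 rfl
      have hsd : S \ T = insert l ((S.erase l) \ T) := by
        ext a
        by_cases ha : a = l <;>
          simp [ha, hl, hlT, Finset.mem_sdiff, Finset.mem_erase]
      unfold prodPi
      rw [hsd, Finset.prod_insert (by simp)]
      ring
    rw [Finset.sum_congr rfl hstep, ← Finset.mul_sum, sum_prodPi_eq_one, mul_one]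
  · simp only [hl, if_false]
    have hset : S.powerset.filter (fun T => l ∉ T) = S.powerset := by
      ext T
      simp only [Finset.mem_filter, Finset.mem_powerset, and_iff_left_iff_imp]
      exact fun hT h => hl (hT h)
    rw [hset, sum_prodPi_eq_one]

lemma relExt_insert_sub {α : Type*} (p : α → ℝ) (v : Finset α → ℝ) (x : α) (S : Finset α) (hx : x ∉ S) :
    relExt p v (insert x S) - relExt p v S
      = p x * ∑ T ∈ S.powerset, (v (insert x T) - v T) * prodPi p T S := by
  unfold relExt
  rw [Finset.sum_powerset_insert hx]
  have h1 : ∀ T ∈ S.powerset,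
      v T * prodPi p T (insert x S) = (1 - p x) * (v T * prodPi p T S) := by
    intro T hT
    rw [Finset.mem_powerset] at hT
    have hxT : x ∉ T := fun h => hx (hT h)
    have hsd : (insert x S) \ T = insert x (S \ T) := by
      ext a
      by_cases ha : a = x <;> simp [ha, hxT, hx]
    unfold prodPi
    rw [hsd, Finset.prod_insert (by simp [hx])]
    ring
  have h2 : ∀ T ∈ S.powerset,
      v (insert x T) * prodPi p (insert x T) (insert x S)
        = p x * (v (insert x T) * prodPi p T S) := by
    intro T hT
    rw [Finset.mem_powerset] at hT
    have hxT : x ∉ T := fun h => hx (hT h)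
    have hsd : (insert x S) \ (insert x T) = S \ T := by
      ext a
      by_cases ha : a = x <;> simp [ha, hx]
    unfold prodPi
    rw [hsd, Finset.prod_insert hxT]
    ring
  rw [Finset.sum_congr rfl h1, Finset.sum_congr rfl h2]
  rw [Finset.mul_sum, ← Finset.sum_add_distrib, ← Finset.sum_sub_distrib]
  apply Finset.sum_congr rfl
  intros
  ring

/-- The other author of paper `k` (junk value if not well-defined). -/
def ot {α β : Type*} (Auth : β → Finset α) (x : α) (k : β) : α :=
  if h : ∃ l, (Auth k).erase x = {l} then h.choose else x

lemma erase_eq_ot {α β : Type*} {Auth : β → Finset α} {x : α} {k : β}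
    (hx : x ∈ Auth k) (hc : (Auth k).card = 2) : (Auth k).erase x = {ot Auth x k} := by
  have h1 : ((Auth k).erase x).card = 1 := by
    rw [Finset.card_erase_of_mem hx, hc]
  obtain ⟨l, hl⟩ := Finset.card_eq_one.mp h1
  have hex : ∃ l, (Auth k).erase x = {l} := ⟨l, hl⟩
  rw [ot, dif_pos hex]
  exact hex.choose_spec

lemma Auth_eq_pair {α β : Type*} {Auth : β → Finset α} {x : α} {k : β}
    (hx : x ∈ Auth k) (hc : (Auth k).card = 2) : Auth k = {x, ot Auth x k} := by
  have := erase_eq_ot hx hc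
  rw [← Finset.insert_erase hx, this]

lemma ot_ne {α β : Type*} {Auth : β → Finset α} {x : α} {k : β}
    (hx : x ∈ Auth k) (hc : (Auth k).card = 2) : ot Auth x k ≠ x := by
  have h := erase_eq_ot hx hc
  have : ot Auth x k ∈ (Auth k).erase x := by rw [h]; exact Finset.mem_singleton_self _
  exact (Finset.mem_erase.mp this).1

lemma ot_mem {α β : Type*} {Auth : β → Finset α} {x : α} {k : β}
    (hx : x ∈ Auth k) (hc : (Auth k).card = 2) : ot Auth x k ∈ Auth k := by
  have h := erase_eq_ot hx hc
  have : ot Auth x k ∈ (Auth k).erase x := by rw [h]; exact Finset.mem_singleton_self _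
  exact Finset.mem_of_mem_erase this

lemma inter_empty_iff {α β : Type*} {Auth : β → Finset α} {x : α} {k : β}
    (hx : x ∈ Auth k) (hc : (Auth k).card = 2) {T : Finset α} (hxT : x ∉ T) :
    Auth k ∩ T = ∅ ↔ ot Auth x k ∉ T := by
  rw [Auth_eq_pair hx hc]
  constructor
  · intro h ho
    have : ot Auth x k ∈ ({x, ot Auth x k} : Finset α) ∩ T :=
      Finset.mem_inter.mpr ⟨by simp, ho⟩
    simp [h] at this
  · intro ho
    ext a
    simp only [Finset.mem_inter, Finset.mem_insert, Finset.mem_singleton,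
      Finset.notMem_empty, iff_false, not_and]
    rintro (rfl | rfl) <;> assumption

lemma vFC_insert_sub {α β : Type*} [Fintype β] (Auth : β → Finset α) (w : β → ℝ) (x : α) (T : Finset α) (hx : x ∉ T) :
    vFC Auth w (insert x T) - vFC Auth w T
      = ∑ k ∈ Finset.univ.filter (fun k => x ∈ Auth k ∧ Auth k ∩ T = ∅), w k := by
  unfold vFC
  have hsub : Finset.univ.filter (fun k => (Auth k ∩ T).Nonempty)
      ⊆ Finset.univ.filter (fun k => (Auth k ∩ insert x T).Nonempty) := by
    intro k hk
    simp only [Finset.mem_filter, Finset.mem_univ, true_and] at hk ⊢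
    obtain ⟨a, ha⟩ := hk
    exact ⟨a, Finset.mem_inter.mpr ⟨(Finset.mem_inter.mp ha).1,
      Finset.mem_insert_of_mem (Finset.mem_inter.mp ha).2⟩⟩
  rw [← Finset.sum_sdiff_eq_sub hsub]
  apply Finset.sum_congr _ (fun _ _ => rfl)
  ext k
  simp only [Finset.mem_sdiff, Finset.mem_filter, Finset.mem_univ, true_and]
  rw [Finset.not_nonempty_iff_eq_empty]
  constructor
  · rintro ⟨⟨a, ha⟩, hT⟩
    rw [Finset.mem_inter, Finset.mem_insert] at ha
    obtain ⟨haA, hax | haT⟩ := ha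
    · exact ⟨hax ▸ haA, hT⟩
    · exfalso
      rw [Finset.eq_empty_iff_forall_notMem] at hT
      exact hT a (Finset.mem_inter.mpr ⟨haA, haT⟩)
  · rintro ⟨hxA, hT⟩
    exact ⟨⟨x, Finset.mem_inter.mpr ⟨hxA, Finset.mem_insert_self _ _⟩⟩, hT⟩

lemma key_marg {α β : Type*} [Fintype β] (Auth : β → Finset α) (w : β → ℝ) (p : α → ℝ) (x : α)
    (h2 : ∀ k, x ∈ Auth k → (Auth k).card = 2) (S : Finset α) (hx : x ∉ S) :
    relExt p (vFC Auth w) (insert x S) - relExt p (vFC Auth w) S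
      = p x * ∑ k ∈ Pap Auth x, w k *
          (if ot Auth x k ∈ S then 1 - p (ot Auth x k) else 1) := by
  rw [relExt_insert_sub p (vFC Auth w) x S hx]
  congr 1
  have step1 : ∀ T ∈ S.powerset,
      (vFC Auth w (insert x T) - vFC Auth w T) * prodPi p T S
        = ∑ k : β, (if x ∈ Auth k ∧ Auth k ∩ T = ∅ then w k * prodPi p T S else 0) := by
    intro T hT
    rw [Finset.mem_powerset] at hT
    rw [vFC_insert_sub Auth w x T (fun h => hx (hT h)), Finset.sum_filter, Finset.sum_mul]
    apply Finset.sum_congr rfl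
    intros
    split <;> simp
  rw [Finset.sum_congr rfl step1, Finset.sum_comm]
  rw [Pap, Finset.sum_filter]
  apply Finset.sum_congr rfl
  intro k _
  by_cases hxk : x ∈ Auth k
  · rw [if_pos hxk]
    have hc := h2 k hxk
    have hcond : ∀ T ∈ S.powerset,
        (if x ∈ Auth k ∧ Auth k ∩ T = ∅ then w k * prodPi p T S else 0)
          = (if ot Auth x k ∉ T then w k * prodPi p T S else 0) := by
      intro T hT
      rw [Finset.mem_powerset] at hT
      have hxT : x ∉ T := fun h => hx (hT h)
      refine if_congr ?_ rfl rfl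
      rw [inter_empty_iff hxk hc hxT]
      simp [hxk]
    rw [Finset.sum_congr rfl hcond, ← Finset.sum_filter, ← Finset.mul_sum,
      sum_prodPi_not_mem]
  · rw [if_neg hxk]
    apply Finset.sum_eq_zero
    intro T _
    exact if_neg fun h => hxk h.1

lemma regroup {α β : Type*} [Fintype α] [Fintype β] (Auth : β → Finset α) (w : β → ℝ) (x : α)
    (h2 : ∀ k, x ∈ Auth k → (Auth k).card = 2) (g : α → ℝ) :
    ∑ k ∈ Pap Auth x, w k * g (ot Auth x k)
      = ∑ l ∈ CA Auth x,
          (∑ k ∈ Finset.univ.filter (fun k => x ∈ Auth k ∧ l ∈ Auth k), w k) * g l := by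
  have hr : ∀ l ∈ CA Auth x,
      (∑ k ∈ Finset.univ.filter (fun k => x ∈ Auth k ∧ l ∈ Auth k), w k) * g l
        = ∑ k : β, (if x ∈ Auth k ∧ l ∈ Auth k then w k * g l else 0) := by
    intro l _
    rw [Finset.sum_filter, Finset.sum_mul]
    apply Finset.sum_congr rfl
    intros
    split <;> simp
  rw [Finset.sum_congr rfl hr, Finset.sum_comm]
  rw [Pap, Finset.sum_filter]
  apply Finset.sum_congr rfl
  intro k _
  by_cases hxk : x ∈ Auth k
  · rw [if_pos hxk]
    have hc := h2 k hxk
    have hmem : ot Auth x k ∈ CA Auth x := by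
      simp only [CA, Finset.mem_filter, Finset.mem_univ, true_and]
      exact ⟨ot_ne hxk hc, k, hxk, ot_mem hxk hc⟩
    have hzero : ∀ l ∈ CA Auth x, l ≠ ot Auth x k →
        (if x ∈ Auth k ∧ l ∈ Auth k then w k * g l else 0) = 0 := by
      intro l hl hne
      refine if_neg ?_
      rintro ⟨-, hlk⟩
      simp only [CA, Finset.mem_filter, Finset.mem_univ, true_and] at hl
      rw [Auth_eq_pair hxk hc, Finset.mem_insert, Finset.mem_singleton] at hlk
      rcases hlk with rfl | rfl
      · exact hl.1 rfl
      · exact hne rfl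
    rw [Finset.sum_eq_single_of_mem (ot Auth x k) hmem hzero,
      if_pos ⟨hxk, ot_mem hxk hc⟩]
  · rw [if_neg hxk]
    symm
    apply Finset.sum_eq_zero
    intro l _
    exact if_neg fun h => hxk h.1

lemma half_count {α : Type*} [Fintype α] {x l : α} (hne : l ≠ x) (a b : ℝ) :
    ∑ σ : Fin (Fintype.card α) ≃ α, (if l ∈ precedingSet σ x then a else b)
      = ((Fintype.card α).factorial : ℝ) / 2 * (a + b) := by
  set c : (Fin (Fintype.card α) ≃ α) → Prop := fun σ => l ∈ precedingSet σ x with hcdef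
  have hmemP : ∀ σ : Fin (Fintype.card α) ≃ α, c σ ↔ σ.symm l < σ.symm x := by
    intro σ; simp [hcdef, precedingSet]
  have happ : ∀ (σ : Fin (Fintype.card α) ≃ α) (y : α),
      (σ.trans (Equiv.swap x l)).symm y = σ.symm (Equiv.swap x l y) := by
    intro σ y; simp [Equiv.symm_trans_apply, Equiv.symm_swap]
  have hflip : ∀ σ : Fin (Fintype.card α) ≃ α, c σ → ¬ c (σ.trans (Equiv.swap x l)) := by
    intro σ hσ
    rw [hmemP] at hσ ⊢
    rw [happ, happ, Equiv.swap_apply_left, Equiv.swap_apply_right]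
    exact not_lt.mpr (le_of_lt hσ)
  have hflip' : ∀ σ : Fin (Fintype.card α) ≃ α, ¬ c σ → c (σ.trans (Equiv.swap x l)) := by
    intro σ hσ
    rw [hmemP] at hσ ⊢
    rw [happ, happ, Equiv.swap_apply_left, Equiv.swap_apply_right]
    have hne' : σ.symm x ≠ σ.symm l := fun h => hne (σ.symm.injective h).symm
    exact lt_of_le_of_ne (not_lt.mp hσ) hne'
  have hinv : ∀ σ : Fin (Fintype.card α) ≃ α,
      (σ.trans (Equiv.swap x l)).trans (Equiv.swap x l) = σ := by
    intro σ; ext i; simp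
  have hcard : (Finset.univ.filter c).card = (Finset.univ.filter (fun σ => ¬ c σ)).card := by
    apply Finset.card_bij' (fun σ _ => σ.trans (Equiv.swap x l))
      (fun σ _ => σ.trans (Equiv.swap x l))
    · intro σ _; exact hinv σ
    · intro σ _; exact hinv σ
    · intro σ hσ
      simp only [Finset.mem_filter, Finset.mem_univ, true_and] at hσ ⊢
      exact hflip σ hσ
    · intro σ hσ
      simp only [Finset.mem_filter, Finset.mem_univ, true_and] at hσ ⊢
      exact hflip' σ hσ
  have htot : (Finset.univ.filter c).card + (Finset.univ.filter (fun σ => ¬ c σ)).card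
      = (Fintype.card α).factorial := by
    rw [Finset.card_filter_add_card_filter_not, Finset.card_univ,
      Fintype.card_equiv (Fintype.equivFin α).symm, Fintype.card_fin]
  have h2m : ((Finset.univ.filter c).card : ℝ) * 2 = ((Fintype.card α).factorial : ℝ) := by
    rw [← hcard] at htot
    exact_mod_cast congrArg (Nat.cast : ℕ → ℝ) (by omega : (Finset.univ.filter c).card * 2 = (Fintype.card α).factorial)
  rw [Finset.sum_ite, Finset.sum_const, Finset.sum_const, ← hcard, nsmul_eq_mul, nsmul_eq_mul,
    ← h2m]
  ring

theorem stmt_13 {α β : Type*} [Fintype α] [Fintype β] [DecidableEq α]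
    (Auth : β → Finset α) (hAuth : ∀ k, (Auth k).Nonempty)
    (w : β → ℝ) (hw : ∀ k, 0 ≤ w k)
    (p : α → ℝ) (hp : ∀ i, p i ∈ Set.Icc (0 : ℝ) 1)
    (x : α) (h2 : ∀ k, x ∈ Auth k → (Auth k).card = 2) :
    shapley (relExt p (vFC Auth w)) x =
      p x * ∑ l ∈ CA Auth x, jointContrib Auth w x l * (2 - p l) / 2 := by
  rename_i instA instB instD
  clear instD
  unfold shapley
  have hxP : ∀ σ : Fin (Fintype.card α) ≃ α, x ∉ precedingSet σ x := by
    intro σ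
    simp [precedingSet]
  have hmain : ∀ σ : Fin (Fintype.card α) ≃ α,
      relExt p (vFC Auth w) (insert x (precedingSet σ x))
        - relExt p (vFC Auth w) (precedingSet σ x)
      = p x * ∑ l ∈ CA Auth x,
          jointContrib Auth w x l * (if l ∈ precedingSet σ x then 1 - p l else 1) := by
    intro σ
    rw [key_marg Auth w p x h2 (precedingSet σ x) (hxP σ),
      regroup Auth w x h2 (fun l => if l ∈ precedingSet σ x then 1 - p l else 1)]
    rfl
  calc 1 / ((Fintype.card α).factorial : ℝ) *
      ∑ σ : Fin (Fintype.card α) ≃ α,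
        (relExt p (vFC Auth w) (insert x (precedingSet σ x))
          - relExt p (vFC Auth w) (precedingSet σ x))
      = 1 / ((Fintype.card α).factorial : ℝ) *
        ∑ σ : Fin (Fintype.card α) ≃ α, p x * ∑ l ∈ CA Auth x,
          jointContrib Auth w x l * (if l ∈ precedingSet σ x then 1 - p l else 1) := by
        rw [Finset.sum_congr rfl (fun σ _ => hmain σ)]
    _ = p x * ∑ l ∈ CA Auth x, jointContrib Auth w x l * (2 - p l) / 2 := ?_
  rw [← Finset.mul_sum, Finset.sum_comm]
  have hfac : ((Fintype.card α).factorial : ℝ) ≠ 0 := by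
    exact_mod_cast Nat.factorial_ne_zero _
  have hinner : ∀ l ∈ CA Auth x,
      ∑ σ : Fin (Fintype.card α) ≃ α,
        jointContrib Auth w x l * (if l ∈ precedingSet σ x then 1 - p l else 1)
      = jointContrib Auth w x l * (((Fintype.card α).factorial : ℝ) / 2 * (2 - p l)) := by
    intro l hl
    have hlx : l ≠ x := by
      simp only [CA, Finset.mem_filter, Finset.mem_univ, true_and] at hl
      exact hl.1
    rw [← Finset.mul_sum, half_count hlx (1 - p l) 1]
    ring_nf
  rw [Finset.sum_congr rfl hinner]
  rw [Finset.mul_sum, Finset.mul_sum, Finset.mul_sum]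
  apply Finset.sum_congr rfl
  intro l _
  field_simp

end
end

section
/- Let N be a finite set of players, v : 𝒫(N) → ℝ a TU-game, p : N → [0,1] reliabilities, and v̄ the reliability extension of v. Then for every A ⊆ N and every x ∈ N with x ∉ A, the marginal contribution of x satisfies v̄(A ∪ {x}) − v̄(A) = p_x · Σ_{R ⊆ A} Π_{R,A}(p) · ( v(R ∪ {x}) − v(R) ). -/
open Finset

attribute [local instance] Classical.propDecidable

noncomputable section

lemma prodPi_insert_right {α : Type*} (p : α → ℝ) (T A : Finset α) (x : α)
    (hx : x ∉ A) (hT : T ⊆ A) :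
    prodPi p T (insert x A) = (1 - p x) * prodPi p T A := by
  have hxT : x ∉ T := fun h => hx (hT h)
  rw [prodPi, Finset.insert_sdiff_of_notMem _ hxT,
    Finset.prod_insert (by simp [hx]), prodPi]
  ring

lemma prodPi_insert_both {α : Type*} (p : α → ℝ) (T A : Finset α) (x : α)
    (hx : x ∉ A) (hT : T ⊆ A) :
    prodPi p (insert x T) (insert x A) = p x * prodPi p T A := by
  have hxT : x ∉ T := fun h => hx (hT h)
  rw [prodPi, Finset.insert_sdiff_insert, Finset.sdiff_insert,
    Finset.erase_eq_of_notMem (by simp [hx]), Finset.prod_insert hxT, prodPi]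
  ring

theorem stmt_15 {α : Type*} [Fintype α] [DecidableEq α]
    (v : Finset α → ℝ) (p : α → ℝ) (hp : ∀ i, p i ∈ Set.Icc (0 : ℝ) 1)
    (A : Finset α) (x : α) (hx : x ∉ A) :
    relExt p v (insert x A) - relExt p v A =
      p x * ∑ R ∈ A.powerset, prodPi p R A * (v (insert x R) - v R) := by
  have h : ‹DecidableEq α› = fun a b : α => Classical.propDecidable (a = b) :=
    Subsingleton.elim _ _
  subst h
  rw [relExt, relExt, Finset.sum_powerset_insert hx, Finset.mul_sum,
    add_sub_assoc, ← Finset.sum_sub_distrib, ← Finset.sum_add_distrib]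
  apply Finset.sum_congr rfl
  intro T hT
  rw [mem_powerset] at hT
  rw [prodPi_insert_right p T A x hx hT, prodPi_insert_both p T A x hx hT]
  ring

end
end
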